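/- Equip P = k[x₁,x₂,x₃] with the Poisson bracket {x₁,x₂} = 2x₁x₂, {x₂,x₃} = 2x₂x₃, {x₃,x₁} = 2x₁x₃. Then for an invertible matrix M = (a_{ij}): (i) φ_M is a graded Poisson automorphism of P if and only if M has one of the three forms [[a,0,0],[0,b,0],[0,0,c]], [[0,a,0],[0,0,b],[c,0,0]], [[0,0,a],[b,0,0],[0,c,0]] with a, b, c ∈ k \ {0} (i.e. M is a monomial matrix whose underlying permutation is the identity or a 3-cycle); (ii) φ_M is a Poisson reflection of P if and only if M is one of the diagonal matrices diag(ξ,1,1), diag(1,ξ,1), diag(1,1,ξ) for some root of unity ξ ≠ 1. -/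

import Mathlib

open MvPolynomial

/-- The bracket on `k[x₁,x₂,x₃]` determined by the values `p12 = {x₁,x₂}`, `p23 = {x₂,x₃}`,
`p31 = {x₃,x₁}` via `{f,g} = Σ_{i<j} (∂f/∂xᵢ·∂g/∂xⱼ − ∂f/∂xⱼ·∂g/∂xᵢ)·{xᵢ,xⱼ}`. -/
noncomputable def jacBracket {k : Type*} [Field k] (p12 p23 p31 : MvPolynomial (Fin 3) k)
    (f g : MvPolynomial (Fin 3) k) : MvPolynomial (Fin 3) k :=
  (pderiv 0 f * pderiv 1 g - pderiv 1 f * pderiv 0 g) * p12 +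
    (pderiv 1 f * pderiv 2 g - pderiv 2 f * pderiv 1 g) * p23 +
    (pderiv 2 f * pderiv 0 g - pderiv 0 f * pderiv 2 g) * p31

/-- The graded algebra endomorphism `φ_M` of `k[x₁,x₂,x₃]` with `φ_M(xᵢ) = Σⱼ M i j · xⱼ`. -/
noncomputable def phiM {k : Type*} [Field k] (M : Matrix (Fin 3) (Fin 3) k) :
    MvPolynomial (Fin 3) k →ₐ[k] MvPolynomial (Fin 3) k :=
  aeval fun i => ∑ j, C (M i j) * X j

/-- `φ_M` is a graded Poisson automorphism (for invertible `M`) iff it preserves the bracket. -/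
def IsPoissonAut {k : Type*} [Field k]
    (br : MvPolynomial (Fin 3) k → MvPolynomial (Fin 3) k → MvPolynomial (Fin 3) k)
    (M : Matrix (Fin 3) (Fin 3) k) : Prop :=
  ∀ f g, phiM M (br f g) = br (phiM M f) (phiM M g)

/-- `φ_M` is a Poisson reflection: a graded Poisson automorphism of finite order whose
eigenvalues are `1, 1, ξ` for some root of unity `ξ ≠ 1`. -/
def IsPoissonReflection {k : Type*} [Field k]
    (br : MvPolynomial (Fin 3) k → MvPolynomial (Fin 3) k → MvPolynomial (Fin 3) k)
    (M : Matrix (Fin 3) (Fin 3) k) : Prop :=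
  IsPoissonAut br M ∧ (∃ n, 0 < n ∧ M ^ n = 1) ∧
    ∃ ξ : k, ξ ≠ 1 ∧ (∃ m, 0 < m ∧ ξ ^ m = 1) ∧
      M.charpoly = (Polynomial.X - 1) ^ 2 * (Polynomial.X - Polynomial.C ξ)

section Aux

variable {k : Type*} [Field k] (p12 p23 p31 f g h : MvPolynomial (Fin 3) k)

lemma jac_C (a : k) : jacBracket p12 p23 p31 (C a) g = 0 := by
  simp [jacBracket]

lemma jac_C' (a : k) : jacBracket p12 p23 p31 f (C a) = 0 := by
  simp [jacBracket]

lemma jac_add_left : jacBracket p12 p23 p31 (f + g) h =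
    jacBracket p12 p23 p31 f h + jacBracket p12 p23 p31 g h := by
  simp [jacBracket]; ring

lemma jac_add_right : jacBracket p12 p23 p31 f (g + h) =
    jacBracket p12 p23 p31 f g + jacBracket p12 p23 p31 f h := by
  simp [jacBracket]; ring

lemma jac_mul_left : jacBracket p12 p23 p31 (f * g) h =
    f * jacBracket p12 p23 p31 g h + g * jacBracket p12 p23 p31 f h := by
  simp [jacBracket, pderiv_mul]; ring

lemma jac_mul_right : jacBracket p12 p23 p31 f (g * h) =
    g * jacBracket p12 p23 p31 f h + h * jacBracket p12 p23 p31 f g := by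
  simp [jacBracket, pderiv_mul]; ring

lemma jac_antisymm : jacBracket p12 p23 p31 f g = - jacBracket p12 p23 p31 g f := by
  rw [jacBracket, jacBracket]; ring

lemma aut_of_gen (M : Matrix (Fin 3) (Fin 3) k)
    (H : ∀ i j : Fin 3, phiM M (jacBracket p12 p23 p31 (X i) (X j)) =
      jacBracket p12 p23 p31 (phiM M (X i)) (phiM M (X j))) :
    IsPoissonAut (jacBracket p12 p23 p31) M := by
  have key2 : ∀ (j : Fin 3) f, phiM M (jacBracket p12 p23 p31 f (X j)) =
      jacBracket p12 p23 p31 (phiM M f) (phiM M (X j)) := by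
    intro j f
    induction f using MvPolynomial.induction_on with
    | C a => simp [jac_C]
    | add p q hp hq => simp [jac_add_left, map_add, hp, hq]
    | mul_X p i hp =>
        rw [jac_mul_left, map_add, map_mul, map_mul, hp, H, map_mul, jac_mul_left]
  intro f g
  induction g using MvPolynomial.induction_on with
  | C a => simp [jac_C']
  | add u v hu hv => simp [jac_add_right, map_add, hu, hv]
  | mul_X u j hu =>
      rw [jac_mul_right, map_add, map_mul, map_mul, hu, key2, map_mul, jac_mul_right]

lemma phiM_X (M : Matrix (Fin 3) (Fin 3) k) (i : Fin 3) :
    phiM M (X i) = C (M i 0) * X 0 + C (M i 1) * X 1 + C (M i 2) * X 2 := by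
  rw [phiM, aeval_X, Fin.sum_univ_three]

lemma pd_phi (M : Matrix (Fin 3) (Fin 3) k) (i l : Fin 3) :
    pderiv l (phiM M (X i)) = C (M i l) := by
  fin_cases l <;> simp [phiM_X, pderiv_C_mul, pderiv_X]

lemma gen_identity (M : Matrix (Fin 3) (Fin 3) k) (i j : Fin 3) :
    jacBracket (2 * X 0 * X 1) (2 * X 1 * X 2) (2 * X 0 * X 2)
        (phiM M (X i)) (phiM M (X j)) =
      (C (M i 0) * C (M j 1) - C (M i 1) * C (M j 0)) * (2 * X 0 * X 1) +
      (C (M i 1) * C (M j 2) - C (M i 2) * C (M j 1)) * (2 * X 1 * X 2) +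
      (C (M i 2) * C (M j 0) - C (M i 0) * C (M j 2)) * (2 * X 0 * X 2) := by
  rw [jacBracket, pd_phi, pd_phi, pd_phi, pd_phi, pd_phi, pd_phi]

lemma br01 : jacBracket p12 p23 p31 (X 0) (X 1) = p12 := by simp [jacBracket]
lemma br12 : jacBracket p12 p23 p31 (X 1) (X 2) = p23 := by simp [jacBracket]
lemma br02 : jacBracket p12 p23 p31 (X 0) (X 2) = -p31 := by simp [jacBracket]
lemma brii (i : Fin 3) : jacBracket p12 p23 p31 (X i) (X i) = 0 := by
  simp [jacBracket]; ring

lemma gen_ii (M : Matrix (Fin 3) (Fin 3) k) (i : Fin 3) :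
    phiM M (jacBracket (2 * X 0 * X 1) (2 * X 1 * X 2) (2 * X 0 * X 2) (X i) (X i)) =
      jacBracket (2 * X 0 * X 1) (2 * X 1 * X 2) (2 * X 0 * X 2) (phiM M (X i)) (phiM M (X i)) := by
  rw [gen_identity, brii, map_zero]; ring

lemma gen_swap {M : Matrix (Fin 3) (Fin 3) k} {f g : MvPolynomial (Fin 3) k}
    (h : phiM M (jacBracket (2 * X 0 * X 1) (2 * X 1 * X 2) (2 * X 0 * X 2) f g) =
      jacBracket (2 * X 0 * X 1) (2 * X 1 * X 2) (2 * X 0 * X 2) (phiM M f) (phiM M g)) :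
    phiM M (jacBracket (2 * X 0 * X 1) (2 * X 1 * X 2) (2 * X 0 * X 2) g f) =
      jacBracket (2 * X 0 * X 1) (2 * X 1 * X 2) (2 * X 0 * X 2) (phiM M g) (phiM M f) := by
  rw [jac_antisymm, map_neg, h, ← jac_antisymm]

set_option maxHeartbeats 1600000 in
lemma diag_aut (a b c : k) :
    IsPoissonAut (jacBracket (2 * X 0 * X 1) (2 * X 1 * X 2) (2 * X 0 * X 2))
      (!![a, 0, 0; 0, b, 0; 0, 0, c] : Matrix (Fin 3) (Fin 3) k) := by
  set M := (!![a, 0, 0; 0, b, 0; 0, 0, c] : Matrix (Fin 3) (Fin 3) k) with hMdef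
  have e00 : M 0 0 = a := rfl
  have e01 : M 0 1 = 0 := rfl
  have e02 : M 0 2 = 0 := rfl
  have e10 : M 1 0 = 0 := rfl
  have e11 : M 1 1 = b := rfl
  have e12 : M 1 2 = 0 := rfl
  have e20 : M 2 0 = 0 := rfl
  have e21 : M 2 1 = 0 := rfl
  have e22 : M 2 2 = c := rfl
  apply aut_of_gen
  have H01 : phiM M (jacBracket (2 * X 0 * X 1) (2 * X 1 * X 2) (2 * X 0 * X 2) (X 0) (X 1)) =
      jacBracket (2 * X 0 * X 1) (2 * X 1 * X 2) (2 * X 0 * X 2) (phiM M (X 0)) (phiM M (X 1)) := by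
    rw [gen_identity, br01]
    simp only [map_mul, map_ofNat, map_neg, phiM_X, e00, e01, e02, e10, e11, e12, e20, e21, e22,
      C_0, zero_mul, mul_zero, sub_zero, zero_sub, add_zero, zero_add, neg_zero, neg_neg, neg_mul]
    ring
  have H12 : phiM M (jacBracket (2 * X 0 * X 1) (2 * X 1 * X 2) (2 * X 0 * X 2) (X 1) (X 2)) =
      jacBracket (2 * X 0 * X 1) (2 * X 1 * X 2) (2 * X 0 * X 2) (phiM M (X 1)) (phiM M (X 2)) := by
    rw [gen_identity, br12]
    simp only [map_mul, map_ofNat, map_neg, phiM_X, e00, e01, e02, e10, e11, e12, e20, e21, e22,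
      C_0, zero_mul, mul_zero, sub_zero, zero_sub, add_zero, zero_add, neg_zero, neg_neg, neg_mul]
    ring
  have H02 : phiM M (jacBracket (2 * X 0 * X 1) (2 * X 1 * X 2) (2 * X 0 * X 2) (X 0) (X 2)) =
      jacBracket (2 * X 0 * X 1) (2 * X 1 * X 2) (2 * X 0 * X 2) (phiM M (X 0)) (phiM M (X 2)) := by
    rw [gen_identity, br02]
    simp only [map_mul, map_ofNat, map_neg, phiM_X, e00, e01, e02, e10, e11, e12, e20, e21, e22,
      C_0, zero_mul, mul_zero, sub_zero, zero_sub, add_zero, zero_add, neg_zero, neg_neg, neg_mul]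
    ring
  intro i j
  obtain rfl | rfl | rfl : i = 0 ∨ i = 1 ∨ i = 2 := by omega
  all_goals obtain rfl | rfl | rfl : j = 0 ∨ j = 1 ∨ j = 2 := by omega
  · exact gen_ii M 0
  · exact H01
  · exact H02
  · exact gen_swap H01
  · exact gen_ii M 1
  · exact H12
  · exact gen_swap H02
  · exact gen_swap H12
  · exact gen_ii M 2

set_option maxHeartbeats 1600000 in
lemma cyc1_aut (a b c : k) :
    IsPoissonAut (jacBracket (2 * X 0 * X 1) (2 * X 1 * X 2) (2 * X 0 * X 2))
      (!![0, a, 0; 0, 0, b; c, 0, 0] : Matrix (Fin 3) (Fin 3) k) := by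
  set M := (!![0, a, 0; 0, 0, b; c, 0, 0] : Matrix (Fin 3) (Fin 3) k) with hMdef
  have e00 : M 0 0 = 0 := rfl
  have e01 : M 0 1 = a := rfl
  have e02 : M 0 2 = 0 := rfl
  have e10 : M 1 0 = 0 := rfl
  have e11 : M 1 1 = 0 := rfl
  have e12 : M 1 2 = b := rfl
  have e20 : M 2 0 = c := rfl
  have e21 : M 2 1 = 0 := rfl
  have e22 : M 2 2 = 0 := rfl
  apply aut_of_gen
  have H01 : phiM M (jacBracket (2 * X 0 * X 1) (2 * X 1 * X 2) (2 * X 0 * X 2) (X 0) (X 1)) =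
      jacBracket (2 * X 0 * X 1) (2 * X 1 * X 2) (2 * X 0 * X 2) (phiM M (X 0)) (phiM M (X 1)) := by
    rw [gen_identity, br01]
    simp only [map_mul, map_ofNat, map_neg, phiM_X, e00, e01, e02, e10, e11, e12, e20, e21, e22,
      C_0, zero_mul, mul_zero, sub_zero, zero_sub, add_zero, zero_add, neg_zero, neg_neg, neg_mul]
    ring
  have H12 : phiM M (jacBracket (2 * X 0 * X 1) (2 * X 1 * X 2) (2 * X 0 * X 2) (X 1) (X 2)) =
      jacBracket (2 * X 0 * X 1) (2 * X 1 * X 2) (2 * X 0 * X 2) (phiM M (X 1)) (phiM M (X 2)) := by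
    rw [gen_identity, br12]
    simp only [map_mul, map_ofNat, map_neg, phiM_X, e00, e01, e02, e10, e11, e12, e20, e21, e22,
      C_0, zero_mul, mul_zero, sub_zero, zero_sub, add_zero, zero_add, neg_zero, neg_neg, neg_mul]
    ring
  have H02 : phiM M (jacBracket (2 * X 0 * X 1) (2 * X 1 * X 2) (2 * X 0 * X 2) (X 0) (X 2)) =
      jacBracket (2 * X 0 * X 1) (2 * X 1 * X 2) (2 * X 0 * X 2) (phiM M (X 0)) (phiM M (X 2)) := by
    rw [gen_identity, br02]
    simp only [map_mul, map_ofNat, map_neg, phiM_X, e00, e01, e02, e10, e11, e12, e20, e21, e22,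
      C_0, zero_mul, mul_zero, sub_zero, zero_sub, add_zero, zero_add, neg_zero, neg_neg, neg_mul]
    ring
  intro i j
  obtain rfl | rfl | rfl : i = 0 ∨ i = 1 ∨ i = 2 := by omega
  all_goals obtain rfl | rfl | rfl : j = 0 ∨ j = 1 ∨ j = 2 := by omega
  · exact gen_ii M 0
  · exact H01
  · exact H02
  · exact gen_swap H01
  · exact gen_ii M 1
  · exact H12
  · exact gen_swap H02
  · exact gen_swap H12
  · exact gen_ii M 2

set_option maxHeartbeats 1600000 in
lemma cyc2_aut (a b c : k) :
    IsPoissonAut (jacBracket (2 * X 0 * X 1) (2 * X 1 * X 2) (2 * X 0 * X 2))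
      (!![0, 0, a; b, 0, 0; 0, c, 0] : Matrix (Fin 3) (Fin 3) k) := by
  set M := (!![0, 0, a; b, 0, 0; 0, c, 0] : Matrix (Fin 3) (Fin 3) k) with hMdef
  have e00 : M 0 0 = 0 := rfl
  have e01 : M 0 1 = 0 := rfl
  have e02 : M 0 2 = a := rfl
  have e10 : M 1 0 = b := rfl
  have e11 : M 1 1 = 0 := rfl
  have e12 : M 1 2 = 0 := rfl
  have e20 : M 2 0 = 0 := rfl
  have e21 : M 2 1 = c := rfl
  have e22 : M 2 2 = 0 := rfl
  apply aut_of_gen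
  have H01 : phiM M (jacBracket (2 * X 0 * X 1) (2 * X 1 * X 2) (2 * X 0 * X 2) (X 0) (X 1)) =
      jacBracket (2 * X 0 * X 1) (2 * X 1 * X 2) (2 * X 0 * X 2) (phiM M (X 0)) (phiM M (X 1)) := by
    rw [gen_identity, br01]
    simp only [map_mul, map_ofNat, map_neg, phiM_X, e00, e01, e02, e10, e11, e12, e20, e21, e22,
      C_0, zero_mul, mul_zero, sub_zero, zero_sub, add_zero, zero_add, neg_zero, neg_neg, neg_mul]
    ring
  have H12 : phiM M (jacBracket (2 * X 0 * X 1) (2 * X 1 * X 2) (2 * X 0 * X 2) (X 1) (X 2)) =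
      jacBracket (2 * X 0 * X 1) (2 * X 1 * X 2) (2 * X 0 * X 2) (phiM M (X 1)) (phiM M (X 2)) := by
    rw [gen_identity, br12]
    simp only [map_mul, map_ofNat, map_neg, phiM_X, e00, e01, e02, e10, e11, e12, e20, e21, e22,
      C_0, zero_mul, mul_zero, sub_zero, zero_sub, add_zero, zero_add, neg_zero, neg_neg, neg_mul]
    ring
  have H02 : phiM M (jacBracket (2 * X 0 * X 1) (2 * X 1 * X 2) (2 * X 0 * X 2) (X 0) (X 2)) =
      jacBracket (2 * X 0 * X 1) (2 * X 1 * X 2) (2 * X 0 * X 2) (phiM M (X 0)) (phiM M (X 2)) := by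
    rw [gen_identity, br02]
    simp only [map_mul, map_ofNat, map_neg, phiM_X, e00, e01, e02, e10, e11, e12, e20, e21, e22,
      C_0, zero_mul, mul_zero, sub_zero, zero_sub, add_zero, zero_add, neg_zero, neg_neg, neg_mul]
    ring
  intro i j
  obtain rfl | rfl | rfl : i = 0 ∨ i = 1 ∨ i = 2 := by omega
  all_goals obtain rfl | rfl | rfl : j = 0 ∨ j = 1 ∨ j = 2 := by omega
  · exact gen_ii M 0
  · exact H01
  · exact H02
  · exact gen_swap H01
  · exact gen_ii M 1
  · exact H12
  · exact gen_swap H02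
  · exact gen_swap H12
  · exact gen_ii M 2

end Aux

section Aux2

variable {k : Type*} [Field k]

lemma extract01 (M : Matrix (Fin 3) (Fin 3) k)
    (h : phiM M (jacBracket (2 * X 0 * X 1) (2 * X 1 * X 2) (2 * X 0 * X 2) (X 0) (X 1)) =
      jacBracket (2 * X 0 * X 1) (2 * X 1 * X 2) (2 * X 0 * X 2) (phiM M (X 0)) (phiM M (X 1))) :
    ∀ v0 v1 v2 : k,
      2 * (M 0 0*v0 + M 0 1*v1 + M 0 2*v2) * (M 1 0*v0 + M 1 1*v1 + M 1 2*v2) =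
        2 * (M 0 0*M 1 1 - M 0 1*M 1 0) * (v0*v1) + 2 * (M 0 1*M 1 2 - M 0 2*M 1 1) * (v1*v2)
          + 2 * (M 0 2*M 1 0 - M 0 0*M 1 2) * (v0*v2) := by
  intro v0 v1 v2
  rw [gen_identity, br01] at h
  have h2 := congrArg (eval ![v0, v1, v2]) h
  simp only [phiM_X, map_mul, map_add, map_sub, map_neg, map_ofNat, eval_C, eval_X,
    Matrix.cons_val_zero, Matrix.cons_val_one, Matrix.head_cons,
    Matrix.cons_val_two, Matrix.tail_cons] at h2
  linear_combination h2

lemma extract02 (M : Matrix (Fin 3) (Fin 3) k)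
    (h : phiM M (jacBracket (2 * X 0 * X 1) (2 * X 1 * X 2) (2 * X 0 * X 2) (X 0) (X 2)) =
      jacBracket (2 * X 0 * X 1) (2 * X 1 * X 2) (2 * X 0 * X 2) (phiM M (X 0)) (phiM M (X 2))) :
    ∀ v0 v1 v2 : k,
      -(2 * (M 0 0*v0 + M 0 1*v1 + M 0 2*v2) * (M 2 0*v0 + M 2 1*v1 + M 2 2*v2)) =
        2 * (M 0 0*M 2 1 - M 0 1*M 2 0) * (v0*v1) + 2 * (M 0 1*M 2 2 - M 0 2*M 2 1) * (v1*v2)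
          + 2 * (M 0 2*M 2 0 - M 0 0*M 2 2) * (v0*v2) := by
  intro v0 v1 v2
  rw [gen_identity, br02] at h
  have h2 := congrArg (eval ![v0, v1, v2]) h
  simp only [phiM_X, map_mul, map_add, map_sub, map_neg, map_ofNat, eval_C, eval_X,
    Matrix.cons_val_zero, Matrix.cons_val_one, Matrix.head_cons,
    Matrix.cons_val_two, Matrix.tail_cons] at h2
  linear_combination h2

variable [CharZero k]

lemma scalar_pos (A0 A1 A2 B0 B1 B2 : k)
    (hv : ∀ v0 v1 v2 : k, 2 * (A0*v0 + A1*v1 + A2*v2) * (B0*v0 + B1*v1 + B2*v2) =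
      2 * (A0*B1 - A1*B0) * (v0*v1) + 2 * (A1*B2 - A2*B1) * (v1*v2)
        + 2 * (A2*B0 - A0*B2) * (v0*v2)) :
    A0*B0 = 0 ∧ A1*B1 = 0 ∧ A2*B2 = 0 ∧ A1*B0 = 0 ∧ A2*B1 = 0 ∧ A0*B2 = 0 := by
  refine ⟨?_, ?_, ?_, ?_, ?_, ?_⟩
  · linear_combination (hv 1 0 0) / 2
  · linear_combination (hv 0 1 0) / 2
  · linear_combination (hv 0 0 1) / 2
  · linear_combination (hv 1 1 0 - hv 1 0 0 - hv 0 1 0) / 4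
  · linear_combination (hv 0 1 1 - hv 0 1 0 - hv 0 0 1) / 4
  · linear_combination (hv 1 0 1 - hv 1 0 0 - hv 0 0 1) / 4

lemma scalar_neg (A0 A1 A2 B0 B1 B2 : k)
    (hv : ∀ v0 v1 v2 : k, -(2 * (A0*v0 + A1*v1 + A2*v2) * (B0*v0 + B1*v1 + B2*v2)) =
      2 * (A0*B1 - A1*B0) * (v0*v1) + 2 * (A1*B2 - A2*B1) * (v1*v2)
        + 2 * (A2*B0 - A0*B2) * (v0*v2)) :
    A0*B0 = 0 ∧ A1*B1 = 0 ∧ A2*B2 = 0 ∧ A0*B1 = 0 ∧ A1*B2 = 0 ∧ A2*B0 = 0 := by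
  refine ⟨?_, ?_, ?_, ?_, ?_, ?_⟩
  · linear_combination (hv 1 0 0) / (-2)
  · linear_combination (hv 0 1 0) / (-2)
  · linear_combination (hv 0 0 1) / (-2)
  · linear_combination (- hv 1 1 0 + hv 1 0 0 + hv 0 1 0) / 4
  · linear_combination (- hv 0 1 1 + hv 0 1 0 + hv 0 0 1) / 4
  · linear_combination (- hv 1 0 1 + hv 1 0 0 + hv 0 0 1) / 4

lemma classify (m00 m01 m02 m10 m11 m12 m20 m21 m22 : k)
    (hdet : m00*m11*m22 - m00*m12*m21 - m01*m10*m22 + m01*m12*m20 + m02*m10*m21 - m02*m11*m20 ≠ 0)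
    (q1 : m00*m10 = 0) (q2 : m01*m11 = 0) (q3 : m02*m12 = 0)
    (q4 : m01*m10 = 0) (q5 : m02*m11 = 0) (q6 : m00*m12 = 0)
    (r1 : m00*m20 = 0) (r2 : m01*m21 = 0) (r3 : m02*m22 = 0)
    (r4 : m00*m21 = 0) (r5 : m01*m22 = 0) (r6 : m02*m20 = 0) :
    (m01 = 0 ∧ m02 = 0 ∧ m10 = 0 ∧ m12 = 0 ∧ m20 = 0 ∧ m21 = 0 ∧
      m00 ≠ 0 ∧ m11 ≠ 0 ∧ m22 ≠ 0) ∨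
    (m00 = 0 ∧ m02 = 0 ∧ m10 = 0 ∧ m11 = 0 ∧ m21 = 0 ∧ m22 = 0 ∧
      m01 ≠ 0 ∧ m12 ≠ 0 ∧ m20 ≠ 0) ∨
    (m00 = 0 ∧ m01 = 0 ∧ m11 = 0 ∧ m12 = 0 ∧ m20 = 0 ∧ m22 = 0 ∧
      m02 ≠ 0 ∧ m10 ≠ 0 ∧ m21 ≠ 0) := by
  by_cases h00 : m00 = 0
  · by_cases h01 : m01 = 0
    · have h02 : m02 ≠ 0 := by
        intro h02; exact hdet (by rw [h00, h01, h02]; ring)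
      have z12 : m12 = 0 := by rcases mul_eq_zero.mp q3 with h | h; exact absurd h h02; exact h
      have z11 : m11 = 0 := by rcases mul_eq_zero.mp q5 with h | h; exact absurd h h02; exact h
      have z20 : m20 = 0 := by rcases mul_eq_zero.mp r6 with h | h; exact absurd h h02; exact h
      have z22 : m22 = 0 := by rcases mul_eq_zero.mp r3 with h | h; exact absurd h h02; exact h
      have key : m02 * (m10 * m21) ≠ 0 := by
        intro e; exact hdet (by rw [h00, h01, z11, z12, z20, z22]; linear_combination e)
      have h10 : m10 ≠ 0 := fun e => key (by rw [e]; ring)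
      have h21 : m21 ≠ 0 := fun e => key (by rw [e]; ring)
      exact Or.inr (Or.inr ⟨h00, h01, z11, z12, z20, z22, h02, h10, h21⟩)
    · have z11 : m11 = 0 := by rcases mul_eq_zero.mp q2 with h | h; exact absurd h h01; exact h
      have z10 : m10 = 0 := by rcases mul_eq_zero.mp q4 with h | h; exact absurd h h01; exact h
      have z21 : m21 = 0 := by rcases mul_eq_zero.mp r2 with h | h; exact absurd h h01; exact h
      have z22 : m22 = 0 := by rcases mul_eq_zero.mp r5 with h | h; exact absurd h h01; exact h
      have key : m01 * (m12 * m20) ≠ 0 := by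
        intro e; exact hdet (by rw [h00, z10, z11, z21, z22]; linear_combination e)
      have h12 : m12 ≠ 0 := fun e => key (by rw [e]; ring)
      have h20 : m20 ≠ 0 := fun e => key (by rw [e]; ring)
      have z02 : m02 = 0 := by rcases mul_eq_zero.mp q3 with h | h; exact h; exact absurd h h12
      exact Or.inr (Or.inl ⟨h00, z02, z10, z11, z21, z22, h01, h12, h20⟩)
  · have z10 : m10 = 0 := by rcases mul_eq_zero.mp q1 with h | h; exact absurd h h00; exact h
    have z12 : m12 = 0 := by rcases mul_eq_zero.mp q6 with h | h; exact absurd h h00; exact h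
    have z20 : m20 = 0 := by rcases mul_eq_zero.mp r1 with h | h; exact absurd h h00; exact h
    have z21 : m21 = 0 := by rcases mul_eq_zero.mp r4 with h | h; exact absurd h h00; exact h
    have key : m00 * (m11 * m22) ≠ 0 := by
      intro e; exact hdet (by rw [z10, z12, z20, z21]; linear_combination e)
    have h11 : m11 ≠ 0 := fun e => key (by rw [e]; ring)
    have h22 : m22 ≠ 0 := fun e => key (by rw [e]; ring)
    have z01 : m01 = 0 := by rcases mul_eq_zero.mp q2 with h | h; exact h; exact absurd h h11
    have z02 : m02 = 0 := by rcases mul_eq_zero.mp r3 with h | h; exact h; exact absurd h h22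
    exact Or.inl ⟨z01, z02, z10, z12, z20, z21, h00, h11, h22⟩

/-- Forward direction of part (i). -/
lemma aut_classify (M : Matrix (Fin 3) (Fin 3) k) (hM : IsUnit M.det)
    (h : IsPoissonAut (jacBracket (2 * X 0 * X 1) (2 * X 1 * X 2) (2 * X 0 * X 2)) M) :
    ∃ a b c : k, a ≠ 0 ∧ b ≠ 0 ∧ c ≠ 0 ∧
      (M = !![a, 0, 0; 0, b, 0; 0, 0, c] ∨ M = !![0, a, 0; 0, 0, b; c, 0, 0] ∨
        M = !![0, 0, a; b, 0, 0; 0, c, 0]) := by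
  obtain ⟨q1, q2, q3, q4, q5, q6⟩ :=
    scalar_pos (M 0 0) (M 0 1) (M 0 2) (M 1 0) (M 1 1) (M 1 2) (extract01 M (h (X 0) (X 1)))
  obtain ⟨r1, r2, r3, r4, r5, r6⟩ :=
    scalar_neg (M 0 0) (M 0 1) (M 0 2) (M 2 0) (M 2 1) (M 2 2) (extract02 M (h (X 0) (X 2)))
  have hdet : M 0 0*M 1 1*M 2 2 - M 0 0*M 1 2*M 2 1 - M 0 1*M 1 0*M 2 2 + M 0 1*M 1 2*M 2 0
      + M 0 2*M 1 0*M 2 1 - M 0 2*M 1 1*M 2 0 ≠ 0 := by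
    have hd : M.det ≠ 0 := hM.ne_zero
    rwa [Matrix.det_fin_three] at hd
  rcases classify (M 0 0) (M 0 1) (M 0 2) (M 1 0) (M 1 1) (M 1 2) (M 2 0) (M 2 1) (M 2 2)
      hdet q1 q2 q3 q4 q5 q6 r1 r2 r3 r4 r5 r6 with
    ⟨z01, z02, z10, z12, z20, z21, h00, h11, h22⟩ |
    ⟨z00, z02, z10, z11, z21, z22, h01, h12, h20⟩ |
    ⟨z00, z01, z11, z12, z20, z22, h02, h10, h21⟩
  · exact ⟨M 0 0, M 1 1, M 2 2, h00, h11, h22, Or.inl ((Matrix.eta_fin_three M).trans (by rw [z01, z02, z10, z12, z20, z21]))⟩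
  · exact ⟨M 0 1, M 1 2, M 2 0, h01, h12, h20, Or.inr (Or.inl ((Matrix.eta_fin_three M).trans (by rw [z00, z02, z10, z11, z21, z22])))⟩
  · exact ⟨M 0 2, M 1 0, M 2 1, h02, h10, h21, Or.inr (Or.inr ((Matrix.eta_fin_three M).trans (by rw [z00, z01, z11, z12, z20, z22])))⟩

lemma charpoly_diag (a b c : k) :
    (!![a, 0, 0; 0, b, 0; 0, 0, c] : Matrix (Fin 3) (Fin 3) k).charpoly =
      (Polynomial.X - Polynomial.C a) * (Polynomial.X - Polynomial.C b) *
        (Polynomial.X - Polynomial.C c) := by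
  rw [Matrix.charpoly, Matrix.det_fin_three]
  simp [Matrix.charmatrix_apply_eq, Matrix.charmatrix_apply_ne]

lemma charpoly_cyc1 (a b c : k) :
    (!![0, a, 0; 0, 0, b; c, 0, 0] : Matrix (Fin 3) (Fin 3) k).charpoly =
      Polynomial.X ^ 3 - Polynomial.C (a * b * c) := by
  rw [Matrix.charpoly, Matrix.det_fin_three]
  simp [Matrix.charmatrix_apply_eq, Matrix.charmatrix_apply_ne, map_mul,
    Matrix.vecHead, Matrix.vecTail]
  ring

lemma charpoly_cyc2 (a b c : k) :
    (!![0, 0, a; b, 0, 0; 0, c, 0] : Matrix (Fin 3) (Fin 3) k).charpoly =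
      Polynomial.X ^ 3 - Polynomial.C (a * b * c) := by
  rw [Matrix.charpoly, Matrix.det_fin_three]
  simp [Matrix.charmatrix_apply_eq, Matrix.charmatrix_apply_ne, map_mul,
    Matrix.vecHead, Matrix.vecTail]
  ring

lemma no_cyc (q : k) (ξ : k)
    (h : (Polynomial.X : Polynomial k) ^ 3 - Polynomial.C q =
      (Polynomial.X - 1) ^ 2 * (Polynomial.X - Polynomial.C ξ)) : False := by
  have h2 := congrArg (fun p : Polynomial k => Polynomial.eval 1 (Polynomial.derivative p)) h
  simp [Polynomial.derivative_pow, Polynomial.derivative_sub, Polynomial.derivative_mul] at h2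

lemma diag_pow (a b c : k) (m : ℕ) :
    (!![a, 0, 0; 0, b, 0; 0, 0, c] : Matrix (Fin 3) (Fin 3) k) ^ m =
      !![a ^ m, 0, 0; 0, b ^ m, 0; 0, 0, c ^ m] := by
  have : (!![a, 0, 0; 0, b, 0; 0, 0, c] : Matrix (Fin 3) (Fin 3) k) =
      Matrix.diagonal ![a, b, c] := by
    ext i j
    fin_cases i <;> fin_cases j <;> simp [Matrix.diagonal, Matrix.vecHead, Matrix.vecTail]
  rw [this, Matrix.diagonal_pow]
  ext i j
  fin_cases i <;> fin_cases j <;> simp [Matrix.diagonal, Matrix.vecHead, Matrix.vecTail]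

end Aux2

/-- Case `{x₁,x₂} = 2x₁x₂`, `{x₂,x₃} = 2x₂x₃`, `{x₃,x₁} = 2x₁x₃`. -/
theorem stmt_5 {k : Type*} [Field k] [IsAlgClosed k] [CharZero k]
    (M : Matrix (Fin 3) (Fin 3) k) (hM : IsUnit M.det) :
    (IsPoissonAut (jacBracket (2 * X 0 * X 1) (2 * X 1 * X 2) (2 * X 0 * X 2)) M ↔
      ∃ a b c : k, a ≠ 0 ∧ b ≠ 0 ∧ c ≠ 0 ∧
        (M = !![a, 0, 0; 0, b, 0; 0, 0, c] ∨ M = !![0, a, 0; 0, 0, b; c, 0, 0] ∨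
          M = !![0, 0, a; b, 0, 0; 0, c, 0])) ∧
    (IsPoissonReflection (jacBracket (2 * X 0 * X 1) (2 * X 1 * X 2) (2 * X 0 * X 2)) M ↔
      ∃ ξ : k, ξ ≠ 1 ∧ (∃ m, 0 < m ∧ ξ ^ m = 1) ∧
        (M = !![ξ, 0, 0; 0, 1, 0; 0, 0, 1] ∨ M = !![1, 0, 0; 0, ξ, 0; 0, 0, 1] ∨
          M = !![1, 0, 0; 0, 1, 0; 0, 0, ξ])) := by
  constructor
  · constructor
    · exact aut_classify M hM
    · rintro ⟨a, b, c, ha, hb, hc, rfl | rfl | rfl⟩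
      · exact diag_aut a b c
      · exact cyc1_aut a b c
      · exact cyc2_aut a b c
  · constructor
    · rintro ⟨hAut, -, ξ, hξ1, ⟨m, hm, hξm⟩, hcp⟩
      have hξ0 : ξ ≠ 0 := by
        rintro rfl
        rw [zero_pow hm.ne'] at hξm
        exact zero_ne_one hξm
      obtain ⟨a, b, c, ha, hb, hc, hf⟩ := aut_classify M hM hAut
      rcases hf with rfl | rfl | rfl
      · rw [charpoly_diag] at hcp
        have hcase : ∀ x : k, (x - 1) ^ 2 * (x - ξ) = 0 → x = 1 ∨ x = ξ := by
          intro x hx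
          rcases mul_eq_zero.mp hx with h | h
          · exact Or.inl (sub_eq_zero.mp (pow_eq_zero_iff (two_ne_zero) |>.mp h))
          · exact Or.inr (sub_eq_zero.mp h)
        have hA : a = 1 ∨ a = ξ := by
          apply hcase
          have h1 := congrArg (Polynomial.eval a) hcp
          simp only [Polynomial.eval_mul, Polynomial.eval_sub, Polynomial.eval_pow,
            Polynomial.eval_one, Polynomial.eval_X, Polynomial.eval_C] at h1
          linear_combination -h1
        have hB : b = 1 ∨ b = ξ := by
          apply hcase
          have h1 := congrArg (Polynomial.eval b) hcp
          simp only [Polynomial.eval_mul, Polynomial.eval_sub, Polynomial.eval_pow,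
            Polynomial.eval_one, Polynomial.eval_X, Polynomial.eval_C] at h1
          linear_combination -h1
        have hC : c = 1 ∨ c = ξ := by
          apply hcase
          have h1 := congrArg (Polynomial.eval c) hcp
          simp only [Polynomial.eval_mul, Polynomial.eval_sub, Polynomial.eval_pow,
            Polynomial.eval_one, Polynomial.eval_X, Polynomial.eval_C] at h1
          linear_combination -h1
        have hzero := congrArg (Polynomial.eval 0) hcp
        have hone := congrArg (Polynomial.eval 1) hcp
        simp only [Polynomial.eval_mul, Polynomial.eval_sub, Polynomial.eval_pow,
          Polynomial.eval_one, Polynomial.eval_X, Polynomial.eval_C,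
          Polynomial.eval_zero] at hzero hone
        rcases hA with hA | hA <;> rcases hB with hB | hB <;> rcases hC with hC | hC
        · rw [hA, hB, hC] at hzero
          exact absurd (by linear_combination hzero : ξ = 1) hξ1
        · exact ⟨ξ, hξ1, ⟨m, hm, hξm⟩, Or.inr (Or.inr (by rw [hA, hB, hC]))⟩
        · exact ⟨ξ, hξ1, ⟨m, hm, hξm⟩, Or.inr (Or.inl (by rw [hA, hB, hC]))⟩
        · rw [hA, hB, hC] at hzero
          have hz : ξ * (ξ - 1) = 0 := by linear_combination -hzero
          rcases mul_eq_zero.mp hz with h | h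
          · exact absurd h hξ0
          · exact absurd (sub_eq_zero.mp h) hξ1
        · exact ⟨ξ, hξ1, ⟨m, hm, hξm⟩, Or.inl (by rw [hA, hB, hC])⟩
        · rw [hA, hB, hC] at hzero
          have hz : ξ * (ξ - 1) = 0 := by linear_combination -hzero
          rcases mul_eq_zero.mp hz with h | h
          · exact absurd h hξ0
          · exact absurd (sub_eq_zero.mp h) hξ1
        · rw [hA, hB, hC] at hzero
          have hz : ξ * (ξ - 1) = 0 := by linear_combination -hzero
          rcases mul_eq_zero.mp hz with h | h
          · exact absurd h hξ0
          · exact absurd (sub_eq_zero.mp h) hξ1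
        · rw [hA, hB, hC] at hone
          have hz : (1 - ξ) ^ 3 = 0 := by linear_combination hone
          have h3 := pow_eq_zero_iff (three_ne_zero) |>.mp hz
          exact absurd (sub_eq_zero.mp h3).symm hξ1
      · rw [charpoly_cyc1] at hcp
        exact (no_cyc _ _ hcp).elim
      · rw [charpoly_cyc2] at hcp
        exact (no_cyc _ _ hcp).elim
    · rintro ⟨ξ, hξ1, ⟨m, hm, hξm⟩, rfl | rfl | rfl⟩
      · refine ⟨diag_aut ξ 1 1, ⟨m, hm, ?_⟩, ξ, hξ1, ⟨m, hm, hξm⟩, ?_⟩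
        · rw [diag_pow, hξm, one_pow, ← Matrix.one_fin_three]
        · rw [charpoly_diag, Polynomial.C_1]; ring
      · refine ⟨diag_aut 1 ξ 1, ⟨m, hm, ?_⟩, ξ, hξ1, ⟨m, hm, hξm⟩, ?_⟩
        · rw [diag_pow, hξm, one_pow, ← Matrix.one_fin_three]
        · rw [charpoly_diag, Polynomial.C_1]; ring
      · refine ⟨diag_aut 1 1 ξ, ⟨m, hm, ?_⟩, ξ, hξ1, ⟨m, hm, hξm⟩, ?_⟩
        · rw [diag_pow, hξm, one_pow, ← Matrix.one_fin_three]
        · rw [charpoly_diag, Polynomial.C_1]; ring
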